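/- Let F be a field and let P ∈ F[x_1,…,x_n] be a polynomial with deg(P) < |F|. If φ, ψ : F^n → F^n are maps such that P(x + λy) = P(φ(x) + λψ(y)) for all x, y ∈ F^n and λ ∈ F, and φ is surjective, then for every l ∈ L_P the function v ↦ l(ψ(v)) coincides with some element of L_P; that is, there exists l' ∈ L_P with l(ψ(v)) = l'(v) for all v ∈ F^n. -/
import Mathlib


open scoped Classical

noncomputable section

/-- The radical of a function `f : V → F`, as a linear subspace of `V`. -/
def funRadical {F V : Type*} [Field F] [AddCommGroup V] [Module F V]
    (f : V → F) : Submodule F V where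
  carrier := {w | ∀ (v : V) (lam : F), f (v + lam • w) = f v}
  zero_mem' := by intro v lam; simp
  add_mem' := by
    intro a b ha hb v lam
    have h1 : v + lam • (a + b) = (v + lam • a) + lam • b := by
      rw [smul_add]; abel
    rw [h1, hb (v + lam • a) lam, ha v lam]
  smul_mem' := by
    intro c a ha v lam
    have h1 : v + lam • (c • a) = v + (lam * c) • a := by rw [smul_smul]
    rw [h1, ha v (lam * c)]

/-- The directional derivative of a multivariate polynomial `P` along `v` at `a`:
the coefficient of `t` in the univariate polynomial `P (a + t • v)`. -/
def dirDeriv {F : Type*} [Field F] {n : ℕ}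
    (P : MvPolynomial (Fin n) F) (a v : Fin n → F) : F :=
  ((MvPolynomial.aeval
    (fun i => Polynomial.C (a i) + Polynomial.C (v i) * Polynomial.X)) P).coeff 1

/-- The space `L_P`: the span of the functionals `v ↦ ∂P/∂v(a)` over all `a ∈ F^n`. -/
def polyLP {F : Type*} [Field F] {n : ℕ} (P : MvPolynomial (Fin n) F) :
    Submodule F ((Fin n → F) → F) :=
  Submodule.span F (Set.range fun a : Fin n → F => fun v => dirDeriv P a v)

lemma eval_dirPoly {F : Type*} [Field F] {n : ℕ}
    (P : MvPolynomial (Fin n) F) (a v : Fin n → F) (lam : F) :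
    Polynomial.eval lam ((MvPolynomial.aeval
      (fun i => Polynomial.C (a i) + Polynomial.C (v i) * Polynomial.X)) P)
    = MvPolynomial.eval (a + lam • v) P := by
  rw [← Polynomial.coe_aeval_eq_eval, MvPolynomial.comp_aeval_apply]
  have : (fun i => (Polynomial.aeval lam) (Polynomial.C (a i) + Polynomial.C (v i) * Polynomial.X)) = (a + lam • v) := by
    funext i
    show (Polynomial.aeval lam) (Polynomial.C (a i) + Polynomial.C (v i) * Polynomial.X) = a i + lam * v i
    rw [map_add, map_mul, Polynomial.aeval_C, Polynomial.aeval_C, Polynomial.aeval_X, mul_comm]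
    simp
  rw [this, ← MvPolynomial.coe_aeval_eq_eval]
  rfl

lemma natDegree_dirPoly_le {F : Type*} [Field F] {n : ℕ}
    (P : MvPolynomial (Fin n) F) (a v : Fin n → F) :
    ((MvPolynomial.aeval
      (fun i => Polynomial.C (a i) + Polynomial.C (v i) * Polynomial.X)) P).natDegree
    ≤ P.totalDegree := by
  rw [MvPolynomial.aeval_def, MvPolynomial.eval₂_eq]
  apply Polynomial.natDegree_sum_le_of_forall_le
  intro d hd
  calc (algebraMap F (Polynomial F) (MvPolynomial.coeff d P) *
        ∏ i ∈ d.support, (Polynomial.C (a i) + Polynomial.C (v i) * Polynomial.X) ^ d i).natDegree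
      ≤ (∏ i ∈ d.support, (Polynomial.C (a i) + Polynomial.C (v i) * Polynomial.X) ^ d i).natDegree := by
        simpa using Polynomial.natDegree_C_mul_le _ _
    _ ≤ ∑ i ∈ d.support, ((Polynomial.C (a i) + Polynomial.C (v i) * Polynomial.X) ^ d i).natDegree :=
        Polynomial.natDegree_prod_le _ _
    _ ≤ ∑ i ∈ d.support, d i := by
        apply Finset.sum_le_sum
        intro i _
        calc _ ≤ d i * (Polynomial.C (a i) + Polynomial.C (v i) * Polynomial.X).natDegree :=
              Polynomial.natDegree_pow_le
          _ ≤ d i * 1 := by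
              gcongr
              apply Polynomial.natDegree_add_le_of_degree_le
              · simp
              · exact (Polynomial.natDegree_C_mul_le _ _).trans (by simp)
          _ = d i := mul_one _
    _ ≤ P.totalDegree := MvPolynomial.le_totalDegree hd

lemma dirDeriv_eq_of_eval_eq {F : Type*} [Field F] {n : ℕ}
    (P : MvPolynomial (Fin n) F)
    (hdeg : (P.totalDegree : Cardinal) < Cardinal.mk F)
    (a v x y : Fin n → F)
    (hev : ∀ lam : F, MvPolynomial.eval (a + lam • v) P = MvPolynomial.eval (x + lam • y) P) :
    dirDeriv P a v = dirDeriv P x y := by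
  set Q1 := (MvPolynomial.aeval
    (fun i => Polynomial.C (a i) + Polynomial.C (v i) * Polynomial.X)) P with hQ1
  set Q2 := (MvPolynomial.aeval
    (fun i => Polynomial.C (x i) + Polynomial.C (y i) * Polynomial.X)) P with hQ2
  have hzero : Q1 - Q2 = 0 := by
    apply Polynomial.eq_zero_of_forall_eval_zero_of_natDegree_lt_card
    · intro r
      simp [hQ1, hQ2, eval_dirPoly, hev r]
    · calc ((Q1 - Q2).natDegree : Cardinal) ≤ (P.totalDegree : Cardinal) := by
            rw [Nat.cast_le]
            exact (Polynomial.natDegree_sub_le _ _).trans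
              (max_le (natDegree_dirPoly_le P a v) (natDegree_dirPoly_le P x y))
        _ < Cardinal.mk F := hdeg
  have : Q1 = Q2 := by rwa [sub_eq_zero] at hzero
  unfold dirDeriv
  rw [← hQ1, ← hQ2, this]


theorem stmt_13 {F : Type*} [Field F] {n : ℕ}
    (P : MvPolynomial (Fin n) F)
    (hdeg : (P.totalDegree : Cardinal) < Cardinal.mk F)
    (phi psi : (Fin n → F) → (Fin n → F))
    (h : ∀ (x y : Fin n → F) (lam : F),
      MvPolynomial.eval (x + lam • y) P = MvPolynomial.eval (phi x + lam • psi y) P)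
    (hsurj : Function.Surjective phi) :
    ∀ l ∈ polyLP P, ∃ l' ∈ polyLP P, ∀ v : Fin n → F, l (psi v) = l' v := by
  simp only [polyLP]
  intro l hl
  induction hl using Submodule.span_induction with
  | mem l hlmem =>
    obtain ⟨a, rfl⟩ := hlmem
    obtain ⟨x0, rfl⟩ := hsurj a
    refine ⟨fun v => dirDeriv P x0 v, Submodule.subset_span ⟨x0, rfl⟩, fun v => ?_⟩
    exact dirDeriv_eq_of_eval_eq P hdeg (phi x0) (psi v) x0 v (fun lam => (h x0 v lam).symm)
  | zero => exact ⟨0, Submodule.zero_mem _, fun v => rfl⟩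
  | add f g hf hg ihf ihg =>
    obtain ⟨f', hf', hfeq⟩ := ihf
    obtain ⟨g', hg', hgeq⟩ := ihg
    exact ⟨f' + g', Submodule.add_mem _ hf' hg',
      fun v => by simp [Pi.add_apply, hfeq v, hgeq v]⟩
  | smul c f hf ihf =>
    obtain ⟨f', hf', hfeq⟩ := ihf
    exact ⟨c • f', Submodule.smul_mem _ c hf',
      fun v => by simp [Pi.smul_apply, hfeq v]⟩


end
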